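/- Let G be a finite abelian group of cardinality N, and let n, d be natural numbers with n ≥ 2 log N. Then the number of nonempty sets X ⊆ G with |X| ≤ n and additive dimension dim(X) ≤ d is at most e^{2nd}. -/

import Mathlib

open Finset

/-- A finset `S` is dissociated if the only `{-1,0,1}`-combination of its
elements summing to zero is the trivial one. -/
def Dissociated {G : Type*} [AddCommGroup G] (S : Finset G) : Prop :=
  ∀ ε : G → ℤ, (∀ s ∈ S, ε s = -1 ∨ ε s = 0 ∨ ε s = 1) →
    ∑ s ∈ S, ε s • s = 0 → ∀ s ∈ S, ε s = 0

/-- The additive dimension of `A` : the size of a largest dissociated subset of `A`. -/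
noncomputable def addDim {G : Type*} [AddCommGroup G] (A : Finset G) : ℕ :=
  sSup {d : ℕ | ∃ S : Finset G, S ⊆ A ∧ Dissociated S ∧ S.card = d}

/-- `Span(S) = { ∑_{s ∈ S} ε_s s : ε_s ∈ {0, -1, 1} }`. -/
def spn {G : Type*} [AddCommGroup G] (S : Finset G) : Set G :=
  {x | ∃ ε : G → ℤ, (∀ s ∈ S, ε s = -1 ∨ ε s = 0 ∨ ε s = 1) ∧ x = ∑ s ∈ S, ε s • s}

namespace CountSmallDim

/-- Decoding of a `Fin 3` symbol to a coefficient in `{-1,0,1}`. -/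
def dec3 (k : Fin 3) : ℤ := (k : ℤ) - 1

/-- Encoding of a coefficient. -/
def enc3 (z : ℤ) : Fin 3 := if z = -1 then 0 else if z = 0 then 1 else 2

lemma dec3_enc3 {z : ℤ} (h : z = -1 ∨ z = 0 ∨ z = 1) : dec3 (enc3 z) = z := by
  rcases h with h | h | h <;> subst h <;> norm_num [dec3, enc3]

lemma sum_range_getD {α M : Type*} [AddCommMonoid M] (l : List α) (g : α → M) (a : α) :
    ∑ i ∈ Finset.range l.length, g (l.getD i a) = (l.map g).sum := by
  induction l with
  | nil => simp
  | cons x t ih =>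
      rw [List.length_cons, Finset.sum_range_succ']
      simp only [List.getD_cons_succ, List.getD_cons_zero, List.map_cons, List.sum_cons, ih]
      exact add_comm _ _

lemma sum_eq_range {G M : Type*} [AddCommGroup G] [AddCommMonoid M]
    (S : Finset G) (f : G → M) :
    ∑ s ∈ S, f s = ∑ i ∈ Finset.range S.card, f (S.toList.getD i 0) := by
  rw [← Finset.sum_map_toList, ← sum_range_getD S.toList f 0, Finset.length_toList]

variable {G : Type*} [AddCommGroup G]

lemma dissociated_empty : Dissociated (∅ : Finset G) := by
  intro ε _ _ s hs
  simp at hs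

/-- Any element of the span, for `S.card ≤ d`, is a `Fin d → Fin 3`-coded combination. -/
lemma spn_val {S : Finset G} {d : ℕ} (hd : S.card ≤ d) {x : G} (hx : x ∈ spn S) :
    ∃ v : Fin d → Fin 3, x = ∑ i : Fin d, dec3 (v i) • S.toList.getD i 0 := by
  obtain ⟨ε, hval, hxe⟩ := hx
  refine ⟨fun i => enc3 (ε (S.toList.getD i 0)), ?_⟩
  have hlen : S.toList.length = S.card := Finset.length_toList S
  show x = ∑ i : Fin d, dec3 (enc3 (ε (S.toList.getD (i : ℕ) 0))) • S.toList.getD (i : ℕ) 0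
  rw [Fin.sum_univ_eq_sum_range
    (fun i => dec3 (enc3 (ε (S.toList.getD i 0))) • S.toList.getD i 0) d,
    hxe, sum_eq_range S (fun s => ε s • s)]
  rw [← Finset.sum_subset (Finset.range_subset_range.mpr hd) (fun i _ hi => ?_)]
  · refine Finset.sum_congr rfl fun i hi => ?_
    rw [Finset.mem_range] at hi
    have hmem : S.toList.getD i 0 ∈ S := by
      rw [List.getD_eq_getElem _ _ (by omega)]
      exact Finset.mem_toList.mp (List.getElem_mem _)
    rw [dec3_enc3 (hval _ hmem)]
  · rw [Finset.mem_range, not_lt] at hi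
    rw [List.getD_eq_default _ _ (by omega), smul_zero]

/-- The decoding map used for the counting argument. -/
noncomputable def decode (n d : ℕ) (p : (Fin d → Option G) × (Fin n → Fin d → Fin 3)) :
    Finset G :=
  @Finset.image _ _ (Classical.decEq G)
    (fun j : Fin n => ∑ i : Fin d, dec3 (p.2 j i) • ((p.1 i).getD 0)) Finset.univ

/-- Every nonempty set of size at most `n` and additive dimension at most `d`
is in the range of `decode`. -/
lemma exists_decode (n d : ℕ) (X : Finset G) (hX : X.Nonempty) (hcard : X.card ≤ n)
    (hdim : addDim X ≤ d) : ∃ p, X = decode n d p := by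
  classical
  set D : Set ℕ := {k : ℕ | ∃ S : Finset G, S ⊆ X ∧ Dissociated S ∧ S.card = k} with hD
  have hne : D.Nonempty := ⟨0, ∅, Finset.empty_subset _, dissociated_empty, rfl⟩
  have hbdd : BddAbove D := by
    refine ⟨X.card, fun k hk => ?_⟩
    obtain ⟨S, hS, _, hk⟩ := hk
    exact hk ▸ Finset.card_le_card hS
  obtain ⟨S, hSX, hSdis, hScard⟩ := Nat.sSup_mem hne hbdd
  have hSd : S.card ≤ d := by
    have : addDim X = sSup D := rfl
    omega
  -- every element of X is in the span of S
  have hspan : ∀ x ∈ X, x ∈ spn S := by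
    intro x hx
    by_cases hxS : x ∈ S
    · refine ⟨fun g => if g = x then 1 else 0,
        fun s _ => by by_cases h : s = x <;> simp [h], ?_⟩
      show x = ∑ s ∈ S, (if s = x then (1 : ℤ) else 0) • s
      have hcong : ∀ s ∈ S, (if s = x then (1 : ℤ) else 0) • s
          = if s = x then s else 0 := by
        intro s _; by_cases h : s = x <;> simp [h]
      rw [Finset.sum_congr rfl hcong, Finset.sum_ite_eq' S x (fun s => s), if_pos hxS]
    · have hnd : ¬ Dissociated (insert x S) := by
        intro hdis
        have hmem : S.card + 1 ∈ D :=
          ⟨insert x S, Finset.insert_subset hx hSX, hdis,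
            Finset.card_insert_of_notMem hxS⟩
        have := le_csSup hbdd hmem
        omega
      unfold Dissociated at hnd
      push_neg at hnd
      obtain ⟨ε, hval, hsum, s0, hs0, hs0ne⟩ := hnd
      rw [Finset.sum_insert hxS] at hsum
      by_cases hεx : ε x = 0
      · exfalso
        have hzero : ∑ s ∈ S, ε s • s = 0 := by
          rw [hεx, zero_smul, zero_add] at hsum; exact hsum
        have hall := hSdis ε (fun s hs => hval s (Finset.mem_insert_of_mem hs)) hzero
        rcases Finset.mem_insert.mp hs0 with h | h
        · exact hs0ne (h ▸ hεx)
        · exact hs0ne (hall s0 h)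
      · have hεx1 : ε x = -1 ∨ ε x = 1 := by
          rcases hval x (Finset.mem_insert_self x S) with h | h | h
          · exact Or.inl h
          · exact absurd h hεx
          · exact Or.inr h
        refine ⟨fun g => -(ε x) * ε g, fun s hs => ?_, ?_⟩
        · show -(ε x) * ε s = -1 ∨ -(ε x) * ε s = 0 ∨ -(ε x) * ε s = 1
          rcases hεx1 with h1 | h1 <;>
            rcases hval s (Finset.mem_insert_of_mem hs) with h2 | h2 | h2 <;>
            rw [h1, h2] <;> norm_num
        · show x = ∑ s ∈ S, (-(ε x) * ε s) • s
          have hsum' : ∑ s ∈ S, ε s • s = (-(ε x)) • x := by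
            have := eq_neg_of_add_eq_zero_right hsum
            rw [this, neg_smul]
          have hsq : -(ε x) * -(ε x) = 1 := by
            rcases hεx1 with h1 | h1 <;> rw [h1] <;> norm_num
          calc x = (-(ε x) * -(ε x)) • x := by rw [hsq, one_smul]
            _ = (-(ε x)) • ((-(ε x)) • x) := by rw [mul_smul]
            _ = (-(ε x)) • (∑ s ∈ S, ε s • s) := by rw [hsum']
            _ = ∑ s ∈ S, (-(ε x) * ε s) • s := by
                rw [Finset.smul_sum]
                exact Finset.sum_congr rfl fun s _ => (mul_smul _ _ _).symm
  -- now build the code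
  obtain ⟨x0, hx0⟩ := hX
  set m : List G := X.toList with hm
  have hmlen : m.length = X.card := Finset.length_toList X
  set y : Fin n → G := fun j => m.getD j x0 with hy
  have hyX : ∀ j, y j ∈ X := by
    intro j
    by_cases hj : (j : ℕ) < m.length
    · rw [hy]; simp only
      rw [List.getD_eq_getElem _ _ hj]
      exact Finset.mem_toList.mp (List.getElem_mem _)
    · rw [hy]; simp only
      rw [List.getD_eq_default _ _ (by omega)]
      exact hx0
  have hyv : ∀ j, ∃ v : Fin d → Fin 3,
      y j = ∑ i : Fin d, dec3 (v i) • S.toList.getD i 0 :=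
    fun j => spn_val hSd (hspan _ (hyX j))
  refine ⟨⟨fun i => S.toList[(i : ℕ)]?, fun j => (hyv j).choose⟩, ?_⟩
  have hgd : ∀ i : Fin d, (S.toList[(i : ℕ)]?).getD 0 = S.toList.getD i 0 :=
    fun i => List.getD_eq_getElem?_getD.symm
  have hFy : ∀ j : Fin n,
      (∑ i : Fin d, dec3 ((hyv j).choose i) • ((S.toList[(i : ℕ)]?).getD 0)) = y j := by
    intro j
    rw [Finset.sum_congr rfl fun i _ => by rw [hgd i]]
    exact ((hyv j).choose_spec).symm
  apply Finset.ext
  intro a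
  simp only [decode, Finset.mem_image, Finset.mem_univ, true_and]
  constructor
  · intro ha
    have hamem : a ∈ m := Finset.mem_toList.mpr ha
    obtain ⟨k, hk, hka⟩ := List.getElem_of_mem hamem
    have hkn : k < n := by omega
    refine ⟨⟨k, hkn⟩, ?_⟩
    rw [hFy ⟨k, hkn⟩, hy]
    simp only
    rw [List.getD_eq_getElem _ _ (by simpa using hk)]
    exact hka
  · rintro ⟨j, rfl⟩
    rw [hFy j]
    exact hyX j

end CountSmallDim

theorem count_small_dim_sets {G : Type*} [AddCommGroup G] [Fintype G]
    (N n d : ℕ) (hN : N = Fintype.card G) (hn : 2 * Real.log N ≤ (n : ℝ)) :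
    ({X : Finset G | X.Nonempty ∧ X.card ≤ n ∧ addDim X ≤ d}.ncard : ℝ) ≤
      Real.exp (2 * n * d) := by
  classical
  by_cases hn0 : n = 0
  · subst hn0
    have hempty : {X : Finset G | X.Nonempty ∧ X.card ≤ 0 ∧ addDim X ≤ d} = ∅ := by
      ext X
      simp only [Set.mem_setOf_eq, Set.mem_empty_iff_false, iff_false, not_and]
      intro hX hc
      exact absurd (Finset.card_eq_zero.mp (Nat.le_zero.mp hc)) hX.ne_empty
    rw [hempty, Set.ncard_empty]
    simp only [Nat.cast_zero]; exact (Real.exp_pos _).le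
  have hn1 : 1 ≤ n := Nat.one_le_iff_ne_zero.mpr hn0
  -- counting via decode
  set 𝒳 := {X : Finset G | X.Nonempty ∧ X.card ≤ n ∧ addDim X ≤ d} with h𝒳
  have hsub : 𝒳 ⊆ Set.range (CountSmallDim.decode (G := G) n d) := by
    rintro X ⟨h1, h2, h3⟩
    obtain ⟨p, hp⟩ := CountSmallDim.exists_decode n d X h1 h2 h3
    exact ⟨p, hp.symm⟩
  have hc1 : 𝒳.ncard ≤ (Set.range (CountSmallDim.decode (G := G) n d)).ncard :=
    Set.ncard_le_ncard hsub (Set.finite_range _)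
  have hc2 : (Set.range (CountSmallDim.decode (G := G) n d)).ncard ≤
      Fintype.card ((Fin d → Option G) × (Fin n → Fin d → Fin 3)) := by
    rw [← Set.image_univ, ← Finset.coe_univ, ← Finset.coe_image, Set.ncard_coe_finset]
    exact (Finset.card_image_le).trans_eq (by simp)
  have hcardβ : Fintype.card ((Fin d → Option G) × (Fin n → Fin d → Fin 3)) =
      (N + 1) ^ d * (3 ^ d) ^ n := by
    simp [Fintype.card_fun, hN, mul_comm]
  have hcount : (𝒳.ncard : ℝ) ≤ ((N : ℝ) + 1) ^ d * ((3 : ℝ) ^ d) ^ n := by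
    have := hc1.trans (hc2.trans_eq hcardβ)
    calc (𝒳.ncard : ℝ) ≤ (((N + 1) ^ d * (3 ^ d) ^ n : ℕ) : ℝ) := by exact_mod_cast this
      _ = ((N : ℝ) + 1) ^ d * ((3 : ℝ) ^ d) ^ n := by push_cast; ring
  refine hcount.trans ?_
  -- analytic bound
  have hNpos : (1 : ℕ) ≤ N := by
    rw [hN]; exact Fintype.card_pos
  have hN1 : (1 : ℝ) ≤ (N : ℝ) := by exact_mod_cast hNpos
  have hlog2_nonneg : (0 : ℝ) ≤ Real.log 2 := Real.log_nonneg one_le_two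
  have hlog3_nonneg : (0 : ℝ) ≤ Real.log 3 := Real.log_nonneg (by norm_num)
  have he1 := Real.exp_one_gt_d9
  have hkey : Real.log ((N : ℝ) + 1) + (n : ℝ) * Real.log 3 ≤ 2 * n := by
    have hlogN1 : Real.log ((N : ℝ) + 1) ≤ Real.log N + Real.log 2 := by
      rw [← Real.log_mul (by linarith) (by norm_num)]
      apply Real.log_le_log (by linarith)
      nlinarith
    by_cases hN2 : 2 ≤ N
    · have hN2' : (2 : ℝ) ≤ (N : ℝ) := by exact_mod_cast hN2
      have hlogN : Real.log (N : ℝ) ≤ (n : ℝ) / 2 := by linarith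
      have hn2 : (2 : ℝ) ≤ (n : ℝ) := by
        have hl2 := Real.log_two_gt_d9
        have : (1 : ℝ) < (n : ℝ) := by
          have : Real.log 2 ≤ Real.log N := Real.log_le_log (by norm_num) hN2'
          linarith
        have : 1 < n := by exact_mod_cast this
        exact_mod_cast this
      have h18 : Real.log 2 + 2 * Real.log 3 ≤ 3 := by
        have heq : Real.log 2 + 2 * Real.log 3 = Real.log 18 := by
          rw [show (18 : ℝ) = 2 * 3 ^ 2 by norm_num,
            Real.log_mul (by norm_num) (by positivity), Real.log_pow]
          push_cast; ring
        rw [heq, Real.log_le_iff_le_exp (by norm_num)]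
        have hexp3 : Real.exp 3 = Real.exp 1 ^ 3 := by
          rw [← Real.exp_nat_mul]; norm_num
        have h27 : (2.7 : ℝ) ≤ Real.exp 1 := by linarith
        have hpow := pow_le_pow_left₀ (by norm_num : (0:ℝ) ≤ 2.7) h27 3
        rw [hexp3]
        norm_num at hpow ⊢
        linarith
      have hp1 : (n : ℝ) * Real.log 3 ≤ (n : ℝ) * ((3 - Real.log 2) / 2) :=
        mul_le_mul_of_nonneg_left (by linarith) (by positivity)
      have hp2 : 2 * Real.log 2 ≤ (n : ℝ) * Real.log 2 :=
        mul_le_mul_of_nonneg_right hn2 hlog2_nonneg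
      linarith
    · have hNeq : N = 1 := by omega
      have hlogN : Real.log (N : ℝ) = 0 := by rw [hNeq]; simp
      have hn1' : (1 : ℝ) ≤ (n : ℝ) := by exact_mod_cast hn1
      have h6 : Real.log 2 + Real.log 3 ≤ 2 := by
        have heq : Real.log 2 + Real.log 3 = Real.log 6 := by
          rw [← Real.log_mul (by norm_num) (by norm_num)]; norm_num
        rw [heq, Real.log_le_iff_le_exp (by norm_num)]
        have hexp2 : Real.exp 2 = Real.exp 1 ^ 2 := by
          rw [← Real.exp_nat_mul]; norm_num
        have h27 : (2.7 : ℝ) ≤ Real.exp 1 := by linarith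
        have hpow := pow_le_pow_left₀ (by norm_num : (0:ℝ) ≤ 2.7) h27 2
        rw [hexp2]
        norm_num at hpow ⊢
        linarith
      have hp1 : (n : ℝ) * (Real.log 2 + Real.log 3) ≤ (n : ℝ) * 2 :=
        mul_le_mul_of_nonneg_left h6 (by positivity)
      have hp2 : 1 * Real.log 2 ≤ (n : ℝ) * Real.log 2 :=
        mul_le_mul_of_nonneg_right hn1' hlog2_nonneg
      linarith
  have hxp1 : ((N : ℝ) + 1) ^ d = Real.exp ((d : ℝ) * Real.log ((N : ℝ) + 1)) := by
    rw [Real.exp_nat_mul, Real.exp_log (by linarith)]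
  have hxp2 : ((3 : ℝ) ^ d) ^ n = Real.exp (((d : ℝ) * n) * Real.log 3) := by
    rw [← pow_mul, show ((d : ℝ) * n) * Real.log 3 = ((d * n : ℕ) : ℝ) * Real.log 3 by
      push_cast; ring, Real.exp_nat_mul, Real.exp_log (by norm_num)]
  rw [hxp1, hxp2, ← Real.exp_add, Real.exp_le_exp]
  have hd0 : (0 : ℝ) ≤ (d : ℝ) := by positivity
  nlinarith [mul_le_mul_of_nonneg_left hkey hd0]
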